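/- In S = (IO∞(ℤ))ⁿ, if 𝔠 is a congruence with two distinct 𝔠-equivalent elements α and β, then there exists a non-identity idempotent ε ∈ S with ε 𝔠 𝕀 and D(𝕀,ε) = D(α,β). -/

import Mathlib

/-- A partial injective self-map of ℤ (encoded as a `PEquiv`) is monotone. -/
def PMono (f : ℤ ≃. ℤ) : Prop :=
  ∀ x y a b : ℤ, a ∈ f x → b ∈ f y → x ≤ y → a ≤ b

/-- Domain of a partial injective self-map of ℤ. -/
def PDom (f : ℤ ≃. ℤ) : Set ℤ := {x | (f x).isSome}

/-- Range of a partial injective self-map of ℤ. -/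
def PRan (f : ℤ ≃. ℤ) : Set ℤ := {y | (f.symm y).isSome}

/-- Membership in IO∞(ℤ): injective (built into `PEquiv`), monotone,
with cofinite domain and cofinite range. -/
def IOZ (f : ℤ ≃. ℤ) : Prop :=
  PMono f ∧ (PDom f)ᶜ.Finite ∧ (PRan f)ᶜ.Finite

/-- Idempotent element of IO∞(ℤ). -/
def IsIdem (ε : ℤ ≃. ℤ) : Prop := ε.trans ε = ε

/-- Membership in the direct power (IO∞(ℤ))ⁿ. -/
def IOZn (n : ℕ) (α : Fin n → ℤ ≃. ℤ) : Prop := ∀ i, IOZ (α i)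

/-- Coordinatewise composition on the direct power (α then β, as in the paper). -/
def mulN {n : ℕ} (α β : Fin n → ℤ ≃. ℤ) : Fin n → ℤ ≃. ℤ := fun i => (α i).trans (β i)

/-- The identity 𝕀 of (IO∞(ℤ))ⁿ. -/
def oneN (n : ℕ) : Fin n → ℤ ≃. ℤ := fun _ => PEquiv.refl ℤ

/-- εᵢ°: the tuple with ε in coordinate i and identities elsewhere. -/
def epsT {n : ℕ} (i : Fin n) (ε : ℤ ≃. ℤ) : Fin n → ℤ ≃. ℤ :=
  fun j => if j = i then ε else PEquiv.refl ℤ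

/-- A congruence on the semigroup (IO∞(ℤ))ⁿ (relative to the carrier `IOZn n`). -/
def IsCongOn (n : ℕ) (ρ : (Fin n → ℤ ≃. ℤ) → (Fin n → ℤ ≃. ℤ) → Prop) : Prop :=
  (∀ α, IOZn n α → ρ α α) ∧
  (∀ α β, IOZn n α → IOZn n β → ρ α β → ρ β α) ∧
  (∀ α β γ, IOZn n α → IOZn n β → IOZn n γ → ρ α β → ρ β γ → ρ α γ) ∧
  (∀ α β γ, IOZn n α → IOZn n β → IOZn n γ → ρ α β →
    ρ (mulN α γ) (mulN β γ) ∧ ρ (mulN γ α) (mulN γ β))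

/-- The congruence σ_[i]. -/
def sigmaI (n : ℕ) (i : Fin n) (α β : Fin n → ℤ ≃. ℤ) : Prop :=
  ∃ ε : ℤ ≃. ℤ, IOZ ε ∧ IsIdem ε ∧ mulN α (epsT i ε) = mulN β (epsT i ε)

/-- D(α,β): the set of coordinates where α and β differ. -/
def Dset {n : ℕ} (α β : Fin n → ℤ ≃. ℤ) : Set (Fin n) := {i | α i ≠ β i}

/-- Idempotent tuple. -/
def IsIdemN {n : ℕ} (ε : Fin n → ℤ ≃. ℤ) : Prop := ∀ i, (ε i).trans (ε i) = ε i

/-- σ_[i₁,…,i_k] for the set of indices t: α and β agree after right multiplication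
by a product ε°_{i₁}⋯ε°_{i_k} of idempotents supported on t. -/
def sigmaSet (n : ℕ) (t : Finset (Fin n)) (α β : Fin n → ℤ ≃. ℤ) : Prop :=
  ∃ ε : Fin n → ℤ ≃. ℤ, IOZn n ε ∧ IsIdemN ε ∧ (∀ i ∉ t, ε i = PEquiv.refl ℤ) ∧
    mulN α ε = mulN β ε

-- ==================== auxiliary development ====================

open PEquiv

noncomputable def cofIso (S : Set ℤ) (h : Sᶜ.Finite) : ℤ ≃o S := by
  have hinf : S.Infinite := by simpa using Set.Finite.infinite_compl h
  haveI : Nonempty S := hinf.nonempty.to_subtype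
  haveI : NoMaxOrder S := by
    constructor
    rintro ⟨x, hx⟩
    have : ∃ y ∈ S, x < y := by
      by_contra hc
      push_neg at hc
      exact (h.subset (fun y hy => by
        by_contra hyS
        simp only [Set.mem_compl_iff, not_not] at hyS
        exact absurd (hc y hyS) (not_le.mpr hy))).not_infinite (Set.Ioi_infinite x)
    obtain ⟨y, hyS, hxy⟩ := this
    exact ⟨⟨y, hyS⟩, hxy⟩
  haveI : NoMinOrder S := by
    constructor
    rintro ⟨x, hx⟩
    have : ∃ y ∈ S, y < x := by
      by_contra hc
      push_neg at hc
      exact (h.subset (fun y hy => by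
        by_contra hyS
        simp only [Set.mem_compl_iff, not_not] at hyS
        exact absurd (hc y hyS) (not_le.mpr hy))).not_infinite (Set.Iio_infinite x)
    obtain ⟨y, hyS, hxy⟩ := this
    exact ⟨⟨y, hyS⟩, hxy⟩
  letI : DecidablePred (· ∈ S) := Classical.decPred _
  letI : LocallyFiniteOrder S := Subtype.instLocallyFiniteOrder (· ∈ S)
  letI : SuccOrder S := LinearLocallyFiniteOrder.succOrder S
  letI : PredOrder S := LinearLocallyFiniteOrder.predOrder S
  haveI : IsSuccArchimedean S := inferInstance
  exact (orderIsoIntOfLinearSuccPredArch (ι := S)).symm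

lemma trans_apply' (f g : ℤ ≃. ℤ) (x : ℤ) : (f.trans g) x = (f x).bind g := rfl

lemma pdom_refl : PDom (PEquiv.refl ℤ) = Set.univ := by
  ext x; simp [PDom, PEquiv.refl_apply]

lemma pmono_refl : PMono (PEquiv.refl ℤ) := by
  intro x y a b ha hb hxy
  simp only [PEquiv.refl_apply, Option.mem_def, Option.some.injEq] at ha hb
  omega

lemma ioz_refl : IOZ (PEquiv.refl ℤ) := by
  refine ⟨pmono_refl, ?_, ?_⟩ <;>
    simp [PDom, PRan, PEquiv.refl_apply, PEquiv.symm_refl]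

lemma pran_eq_pdom_symm (f : ℤ ≃. ℤ) : PRan f = PDom f.symm := rfl

lemma pdom_eq_pran_symm (f : ℤ ≃. ℤ) : PDom f = PRan f.symm := rfl

lemma pmono_symm {f : ℤ ≃. ℤ} (hf : PMono f) : PMono f.symm := by
  intro x y a b ha hb hxy
  rw [PEquiv.mem_iff_mem] at ha hb
  by_contra hab
  push_neg at hab
  have h1 : y ≤ x := hf b a y x hb ha (le_of_lt hab)
  have hxy' : x = y := le_antisymm hxy h1
  subst hxy'
  exact absurd (PEquiv.inj f ha hb) (ne_of_gt hab)

lemma ioz_symm {f : ℤ ≃. ℤ} (hf : IOZ f) : IOZ f.symm :=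
  ⟨pmono_symm hf.1, hf.2.2, by rw [← pdom_eq_pran_symm]; exact hf.2.1⟩

lemma pmono_trans {f g : ℤ ≃. ℤ} (hf : PMono f) (hg : PMono g) : PMono (f.trans g) := by
  intro x y a b ha hb hxy
  rw [PEquiv.mem_trans] at ha hb
  obtain ⟨c, hc1, hc2⟩ := ha
  obtain ⟨d, hd1, hd2⟩ := hb
  exact hg c d a b hc2 hd2 (hf x y c d hc1 hd1 hxy)

lemma pdom_trans_cofinite {f g : ℤ ≃. ℤ} (hf : (PDom f)ᶜ.Finite) (hg : (PDom g)ᶜ.Finite) :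
    (PDom (f.trans g))ᶜ.Finite := by
  have key : (PDom (f.trans g))ᶜ ⊆ (PDom f)ᶜ ∪ (⋃ y ∈ (PDom g)ᶜ, {x | f x = some y}) := by
    intro x hx
    by_cases hfx : (f x).isSome
    · obtain ⟨y, hy⟩ := Option.isSome_iff_exists.mp hfx
      right
      refine Set.mem_biUnion ?_ (by exact hy)
      have : (f.trans g) x = g y := by rw [trans_apply', hy]; rfl
      simp only [Set.mem_compl_iff, PDom, Set.mem_setOf_eq] at hx ⊢
      rw [this] at hx
      exact hx
    · left; exact hfx
  refine Set.Finite.subset (hf.union (hg.biUnion ?_)) key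
  intro y _
  apply Set.Subsingleton.finite
  intro x1 h1 x2 h2
  exact PEquiv.inj f (Option.mem_def.mpr h1) (Option.mem_def.mpr h2)

lemma ioz_trans {f g : ℤ ≃. ℤ} (hf : IOZ f) (hg : IOZ g) : IOZ (f.trans g) := by
  refine ⟨pmono_trans hf.1 hg.1, pdom_trans_cofinite hf.2.1 hg.2.1, ?_⟩
  rw [pran_eq_pdom_symm, PEquiv.symm_trans_rev]
  exact pdom_trans_cofinite hg.2.2 hf.2.2

lemma pdom_ofSet (S : Set ℤ) [DecidablePred (· ∈ S)] : PDom (PEquiv.ofSet S) = S := by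
  ext x
  simp only [PDom, Set.mem_setOf_eq, PEquiv.ofSet]
  by_cases h : x ∈ S <;> simp [h, PEquiv.coe_mk_apply]

lemma ioz_ofSet (S : Set ℤ) [DecidablePred (· ∈ S)] (h : Sᶜ.Finite) : IOZ (PEquiv.ofSet S) := by
  refine ⟨?_, ?_, ?_⟩
  · intro x y a b ha hb hxy
    rw [PEquiv.mem_ofSet_iff] at ha hb
    rw [ha.1, hb.1]; exact hxy
  · rw [pdom_ofSet]; exact h
  · rw [pran_eq_pdom_symm, PEquiv.ofSet_symm, pdom_ofSet]; exact h

/-- partial identity predicate -/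
def PId (f : ℤ ≃. ℤ) : Prop := ∀ x y : ℤ, y ∈ f x → y = x

lemma pid_self_trans_symm (f : ℤ ≃. ℤ) : PId (f.trans f.symm) := by
  intro x y hy
  rw [PEquiv.mem_trans] at hy
  obtain ⟨c, hc1, hc2⟩ := hy
  rw [PEquiv.mem_iff_mem] at hc2
  exact PEquiv.inj f hc2 hc1

lemma pid_trans {p q : ℤ ≃. ℤ} (hp : PId p) (hq : PId q) : PId (p.trans q) := by
  intro x y hy
  rw [PEquiv.mem_trans] at hy
  obtain ⟨c, hc1, hc2⟩ := hy
  rw [hq c y hc2]; exact hp x c hc1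

lemma pid_idem {p : ℤ ≃. ℤ} (hp : PId p) : p.trans p = p := by
  ext x b
  rw [trans_apply']
  cases h : p x with
  | none => simp
  | some y =>
    have : y = x := hp x y (Option.mem_def.mpr h)
    subst this
    simp [h]

lemma trans_symm_trans' (f : ℤ ≃. ℤ) : f.trans (f.symm.trans f) = f := by
  ext x b
  rw [trans_apply']
  cases h : f x with
  | none => simp
  | some y =>
    have hsymm : f.symm y = some x := f.eq_some_iff.mpr h
    simp only [Option.bind_some]
    rw [trans_apply', hsymm, Option.bind_some, h]

-- tuple-level lemmas

lemma iozn_one (n : ℕ) : IOZn n (oneN n) := fun _ => ioz_refl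

lemma iozn_mulN {n : ℕ} {α β : Fin n → ℤ ≃. ℤ} (hα : IOZn n α) (hβ : IOZn n β) :
    IOZn n (mulN α β) := fun i => ioz_trans (hα i) (hβ i)

lemma iozn_symmN {n : ℕ} {α : Fin n → ℤ ≃. ℤ} (hα : IOZn n α) :
    IOZn n (fun i => (α i).symm) := fun i => ioz_symm (hα i)

lemma mulN_oneN {n : ℕ} (α : Fin n → ℤ ≃. ℤ) : mulN α (oneN n) = α :=
  funext fun i => PEquiv.trans_refl (α i)

/-- From `𝕀 ρ γ` derive `𝕀 ρ γγ⁻¹`. -/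
lemma one_rho_domIdem {n : ℕ} {ρ : (Fin n → ℤ ≃. ℤ) → (Fin n → ℤ ≃. ℤ) → Prop}
    (hρ : IsCongOn n ρ) {γ : Fin n → ℤ ≃. ℤ} (hγ : IOZn n γ)
    (h1 : ρ (oneN n) γ) : ρ (oneN n) (mulN γ (fun i => (γ i).symm)) := by
  obtain ⟨hrefl, hsymm, htrans, hcomp⟩ := hρ
  set γ' : Fin n → ℤ ≃. ℤ := fun i => (γ i).symm with hγ'def
  have hγ' : IOZn n γ' := iozn_symmN hγ
  have h2 := (hcomp (oneN n) γ γ' (iozn_one n) hγ hγ' h1).2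
  rw [mulN_oneN] at h2
  have hIOe : IOZn n (mulN γ' γ) := iozn_mulN hγ' hγ
  have h3 := (hcomp γ' (mulN γ' γ) γ hγ' hIOe hγ h2).2
  have heq : mulN γ (mulN γ' γ) = γ := by
    funext i
    show (γ i).trans ((γ i).symm.trans (γ i)) = γ i
    exact trans_symm_trans' (γ i)
  rw [heq] at h3
  -- h3 : ρ (mulN γ γ') γ
  have hf : IOZn n (mulN γ γ') := iozn_mulN hγ hγ'
  exact hsymm _ _ hf (iozn_one n)
    (htrans _ _ _ hf hγ (iozn_one n) h3 (hsymm _ _ (iozn_one n) hγ h1))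

-- ==================== embedding of ℤ onto a cofinite set ====================

open scoped Classical in
noncomputable def embed (S : Set ℤ) (h : Sᶜ.Finite) : ℤ ≃. ℤ where
  toFun x := some ((cofIso S h x : ℤ))
  invFun y := if hy : y ∈ S then some ((cofIso S h).symm ⟨y, hy⟩) else none
  inv a b := by
    by_cases hb : b ∈ S
    · rw [dif_pos hb]
      simp only [Option.mem_def, Option.some.injEq]
      constructor
      · rintro rfl
        simp
      · intro hba
        subst hba
        simp
    · rw [dif_neg hb]
      simp only [Option.mem_def, Option.some.injEq, reduceCtorEq, false_iff]
      intro hba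
      exact hb (hba ▸ (cofIso S h a).2)

lemma embed_apply (S : Set ℤ) (h : Sᶜ.Finite) (x : ℤ) :
    embed S h x = some ((cofIso S h x : ℤ)) := rfl

lemma embed_isSome (S : Set ℤ) (h : Sᶜ.Finite) (x : ℤ) : (embed S h x).isSome := rfl

open scoped Classical in
lemma embed_symm_apply (S : Set ℤ) (h : Sᶜ.Finite) (y : ℤ) :
    (embed S h).symm y = if hy : y ∈ S then some ((cofIso S h).symm ⟨y, hy⟩) else none := rfl

lemma embed_surj (S : Set ℤ) (h : Sᶜ.Finite) {x : ℤ} (hx : x ∈ S) :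
    ∃ z : ℤ, embed S h z = some x := by
  refine ⟨(cofIso S h).symm ⟨x, hx⟩, ?_⟩
  rw [embed_apply]
  simp

lemma ioz_embed (S : Set ℤ) (h : Sᶜ.Finite) : IOZ (embed S h) := by
  refine ⟨?_, ?_, ?_⟩
  · intro x y a b ha hb hxy
    rw [embed_apply, Option.mem_def, Option.some.injEq] at ha hb
    subst ha; subst hb
    exact Subtype.coe_le_coe.mpr ((cofIso S h).monotone hxy)
  · have : (PDom (embed S h))ᶜ = ∅ := by
      ext x
      simp [PDom, embed_isSome]
    rw [this]; exact Set.finite_empty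
  · have : (PRan (embed S h))ᶜ = Sᶜ := by
      ext y
      simp only [PRan, Set.mem_compl_iff, Set.mem_setOf_eq, embed_symm_apply]
      by_cases hy : y ∈ S <;> simp [hy]
    rw [this]; exact h

-- ==================== the "pass" construction ====================

/-- `Case1 α β i`: there is a point where `α i` is defined with a value `β i` does not take. -/
def Case1 {n : ℕ} (α β : Fin n → ℤ ≃. ℤ) (i : Fin n) : Prop :=
  ∃ x a : ℤ, α i x = some a ∧ β i x ≠ some a

lemma case_cover {n : ℕ} {α β : Fin n → ℤ ≃. ℤ} {i : Fin n} (h : α i ≠ β i) :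
    Case1 α β i ∨ Case1 β α i := by
  have hx : ∃ x, α i x ≠ β i x := by
    by_contra hc
    push_neg at hc
    exact h (PEquiv.ext hc)
  obtain ⟨x, hx⟩ := hx
  cases ha : α i x with
  | some a =>
    left
    exact ⟨x, a, ha, fun hb => hx (ha.trans hb.symm)⟩
  | none =>
    cases hb : β i x with
    | some b =>
      right
      refine ⟨x, b, hb, fun hc => ?_⟩
      rw [ha] at hc
      cases hc
    | none => exact (hx (ha.trans hb.symm)).elim

lemma pass {n : ℕ} {ρ : (Fin n → ℤ ≃. ℤ) → (Fin n → ℤ ≃. ℤ) → Prop}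
    (hρ : IsCongOn n ρ) (α β : Fin n → ℤ ≃. ℤ) (hα : IOZn n α) (hβ : IOZn n β)
    (hab : ρ α β) :
    ∃ γ : Fin n → ℤ ≃. ℤ, IOZn n γ ∧ ρ (oneN n) (mulN γ (fun i => (γ i).symm)) ∧
      (∀ j, α j = β j → γ j = PEquiv.refl ℤ) ∧
      (∀ i, Case1 α β i → ∃ z : ℤ, γ i z = none) := by
  classical
  obtain ⟨hrefl, hsymm, htrans, hcomp⟩ := hρ
  -- the shrinking idempotent π
  set U : Fin n → Set ℤ := fun i =>
    if h : Case1 α β i then {z : ℤ | β i h.choose ≠ some z} else Set.univ with hUdef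
  have hUcof : ∀ i, (U i)ᶜ.Finite := by
    intro i
    rw [hUdef]
    by_cases h : Case1 α β i
    · simp only [h, dif_pos]
      apply Set.Subsingleton.finite
      intro a ha b hb
      simp only [Set.mem_compl_iff, Set.mem_setOf_eq, not_not] at ha hb
      rw [ha] at hb
      exact Option.some.inj hb
    · simp [h]
  set π : Fin n → ℤ ≃. ℤ := fun i => PEquiv.ofSet (U i) with hπdef
  have hπ : IOZn n π := fun i => ioz_ofSet (U i) (hUcof i)
  set α' := mulN α π with hα'def
  set β' := mulN β π with hβ'def
  have hα' : IOZn n α' := iozn_mulN hα hπ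
  have hβ' : IOZn n β' := iozn_mulN hβ hπ
  have hab' : ρ α' β' := (hcomp α β π hα hβ hπ hab).1
  -- u : coordinatewise embedding of ℤ onto dom α'
  set u : Fin n → ℤ ≃. ℤ := fun j => embed (PDom (α' j)) (hα' j).2.1 with hudef
  have hu : IOZn n u := fun j => ioz_embed _ _
  have hkey : ∀ j x, (((u j).trans (α' j)) x).isSome := by
    intro j x
    rw [trans_apply', hudef]
    simp only
    rw [embed_apply, Option.bind_some]
    exact (cofIso (PDom (α' j)) (hα' j).2.1 x).2
  set v : Fin n → ℤ ≃. ℤ := fun j => ((u j).trans (α' j)).symm with hvdef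
  have hv : IOZn n v := fun j => ioz_symm (ioz_trans (hu j) (hα' j))
  have hone : mulN (mulN u α') v = oneN n := by
    funext j
    exact PEquiv.trans_symm_eq_iff_forall_isSome.mpr (hkey j)
  set γ := mulN (mulN u β') v with hγdef
  have huα' : IOZn n (mulN u α') := iozn_mulN hu hα'
  have huβ' : IOZn n (mulN u β') := iozn_mulN hu hβ'
  have hγI : IOZn n γ := iozn_mulN huβ' hv
  have h2 := (hcomp α' β' u hα' hβ' hu hab').2
  have h3 := (hcomp (mulN u α') (mulN u β') v huα' huβ' hv h2).1
  rw [hone] at h3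
  -- h3 : ρ (oneN n) γ
  refine ⟨γ, hγI, one_rho_domIdem ⟨hrefl, hsymm, htrans, hcomp⟩ hγI h3, ?_, ?_⟩
  · intro j hj
    have : α' j = β' j := by rw [hα'def, hβ'def]; show (α j).trans (π j) = _ ; rw [hj]; rfl
    have := congrFun hone j
    rw [hγdef]
    show ((u j).trans (β' j)).trans (v j) = PEquiv.refl ℤ
    rw [← ‹α' j = β' j›]
    exact this
  · intro i hi
    obtain ⟨ha, hb⟩ := hi.choose_spec.choose_spec
    set x₀ := hi.choose
    set a₀ := hi.choose_spec.choose
    -- α' i x₀ = some a₀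
    have hUi : U i = {z : ℤ | β i x₀ ≠ some z} := by rw [hUdef]; simp [hi]; rfl
    have hα'x : α' i x₀ = some a₀ := by
      show ((α i).trans (π i)) x₀ = some a₀
      rw [trans_apply', ha, Option.bind_some]
      show (PEquiv.ofSet (U i)) a₀ = some a₀
      rw [PEquiv.ofSet_eq_some_iff]
      exact ⟨rfl, by rw [hUi]; exact hb⟩
    have hβ'x : β' i x₀ = none := by
      show ((β i).trans (π i)) x₀ = none
      rw [trans_apply']
      cases hbx : β i x₀ with
      | none => rfl
      | some b =>
        rw [Option.bind_some]
        have hbU : b ∉ U i := by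
          rw [hUi]
          simp [hbx]
        show (PEquiv.ofSet (U i)) b = none
        rw [Option.eq_none_iff_forall_not_mem]
        intro c hc
        rw [PEquiv.mem_ofSet_iff] at hc
        exact hbU (hc.1 ▸ hc.2)
    have hx₀dom : x₀ ∈ PDom (α' i) := by
      simp only [PDom, Set.mem_setOf_eq, hα'x]; rfl
    obtain ⟨z, hz⟩ := embed_surj (PDom (α' i)) (hα' i).2.1 hx₀dom
    refine ⟨z, ?_⟩
    show (((u i).trans (β' i)).trans (v i)) z = none
    rw [trans_apply', trans_apply']
    rw [show (u i) z = some x₀ from hz, Option.bind_some, hβ'x]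
    rfl


/-- from distinct 𝔠-equivalent α, β one gets a non-identity idempotent ε
with 𝕀 𝔠 ε and D(𝕀,ε) = D(α,β). -/
theorem stmt14 (n : ℕ) (ρ : (Fin n → ℤ ≃. ℤ) → (Fin n → ℤ ≃. ℤ) → Prop)
    (hρ : IsCongOn n ρ) (α β : Fin n → ℤ ≃. ℤ) (hα : IOZn n α) (hβ : IOZn n β)
    (hab : ρ α β) (hne : α ≠ β) :
    ∃ ε : Fin n → ℤ ≃. ℤ, IOZn n ε ∧ IsIdemN ε ∧ ε ≠ oneN n ∧ ρ (oneN n) ε ∧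
      Dset (oneN n) ε = Dset α β := by
  classical
  have hba : ρ β α := hρ.2.1 _ _ hα hβ hab
  obtain ⟨γ1, hγ1, hρ1, hid1, hc1⟩ := pass hρ α β hα hβ hab
  obtain ⟨γ2, hγ2, hρ2, hid2, hc2⟩ := pass hρ β α hβ hα hba
  set f1 := mulN γ1 (fun i => (γ1 i).symm) with hf1
  set f2 := mulN γ2 (fun i => (γ2 i).symm) with hf2
  have hf1I : IOZn n f1 := iozn_mulN hγ1 (iozn_symmN hγ1)
  have hf2I : IOZn n f2 := iozn_mulN hγ2 (iozn_symmN hγ2)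
  set ε := mulN f1 f2 with hεdef
  have hεI : IOZn n ε := iozn_mulN hf1I hf2I
  have hρε : ρ (oneN n) ε := by
    have h := (hρ.2.2.2 (oneN n) f2 f1 (iozn_one n) hf2I hf1I hρ2).2
    rw [mulN_oneN] at h
    exact hρ.2.2.1 _ _ _ (iozn_one n) hf1I hεI hρ1 h
  have hPId1 : ∀ j, PId (f1 j) := fun j => pid_self_trans_symm (γ1 j)
  have hPId2 : ∀ j, PId (f2 j) := fun j => pid_self_trans_symm (γ2 j)
  have hPIdε : ∀ j, PId (ε j) := fun j => pid_trans (hPId1 j) (hPId2 j)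
  have hidem : IsIdemN ε := fun j => pid_idem (hPIdε j)
  have hsame : ∀ j, α j = β j → ε j = PEquiv.refl ℤ := by
    intro j hj
    have e1 : γ1 j = PEquiv.refl ℤ := hid1 j hj
    have e2 : γ2 j = PEquiv.refl ℤ := hid2 j hj.symm
    show ((γ1 j).trans (γ1 j).symm).trans ((γ2 j).trans (γ2 j).symm) = PEquiv.refl ℤ
    rw [e1, e2]
    simp [PEquiv.symm_refl, PEquiv.trans_refl]
  have hdiff : ∀ i, α i ≠ β i → ∃ z, ε i z = none := by
    intro i hij
    rcases case_cover hij with h1 | h2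
    · obtain ⟨z, hz⟩ := hc1 i h1
      refine ⟨z, ?_⟩
      show ((f1 i).trans (f2 i)) z = none
      rw [trans_apply']
      have hz1 : f1 i z = none := by
        show ((γ1 i).trans (γ1 i).symm) z = none
        rw [trans_apply', hz]
        rfl
      rw [hz1]
      rfl
    · obtain ⟨z, hz⟩ := hc2 i h2
      refine ⟨z, ?_⟩
      show ((f1 i).trans (f2 i)) z = none
      rw [trans_apply']
      cases hf : f1 i z with
      | none => rfl
      | some w =>
        have hwz : w = z := hPId1 i z w (Option.mem_def.mpr hf)
        subst hwz
        rw [Option.bind_some]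
        show ((γ2 i).trans (γ2 i).symm) w = none
        rw [trans_apply', hz]
        rfl
  have hne' : ∀ i, α i ≠ β i → ε i ≠ PEquiv.refl ℤ := by
    intro i hij hcon
    obtain ⟨z, hz⟩ := hdiff i hij
    rw [hcon] at hz
    simp [PEquiv.refl_apply] at hz
  refine ⟨ε, hεI, hidem, ?_, hρε, ?_⟩
  · intro hcon
    obtain ⟨i, hi⟩ := Function.ne_iff.mp hne
    exact hne' i hi (by rw [hcon]; rfl)
  · ext i
    simp only [Dset, Set.mem_setOf_eq, oneN]
    constructor
    · intro h
      by_contra hc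
      exact h ((hsame i (not_not.mp (by simpa using hc))).symm)
    · intro h hcon
      exact hne' i h hcon.symm
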